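/- Let G be a connected regular k-partially walk-regular graph on n vertices with eigenvalues λ₁ > λ₂ ≥ ... ≥ λₙ. Let p be a polynomial of degree at most k with Σ_{i=1}^n p(λᵢ) = 0 (i.e., tr p(A) = 0) and with λ(p) = min_{i∈[2,n]} p(λᵢ) < 0 < p(λ₁). Then α_k(G) ≤ n / (1 - p(λ₁)/λ(p)). -/

import Mathlib

open Polynomial Finset

/-- The independence number of a simple graph: the maximum size of a set of
pairwise non-adjacent vertices. -/
noncomputable def SimpleGraph.indepNumFin {V : Type*} [Fintype V] (G : SimpleGraph V) : ℕ :=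
  sSup {m | ∃ s : Finset V, s.card = m ∧ ∀ u ∈ s, ∀ v ∈ s, ¬ G.Adj u v}

/-- The `k`-th power of a graph: distinct vertices are adjacent iff
their distance in `G` is (finite and) at most `k`. -/
def SimpleGraph.power {V : Type*} (G : SimpleGraph V) (k : ℕ) : SimpleGraph V where
  Adj u v := u ≠ v ∧ G.Reachable u v ∧ G.dist u v ≤ k
  symm := by
    constructor
    intro u v ⟨h1, h2, h3⟩
    exact ⟨h1.symm, h2.symm, by rwa [SimpleGraph.dist_comm]⟩
  loopless := by constructor; intro u ⟨h, _⟩; exact h rfl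

/-- The `k`-independence number: the maximum size of a set of vertices at
pairwise distance greater than `k`. -/
noncomputable def SimpleGraph.kIndepNum {V : Type*} [Fintype V] (G : SimpleGraph V) (k : ℕ) : ℕ :=
  (G.power k).indepNumFin
open Matrix

section aux
variable {n : ℕ}

lemma my_eval_charpoly (M : Matrix (Fin n) (Fin n) ℝ) (t : ℝ) :
    M.charpoly.eval t = (Matrix.diagonal (fun _ => t) - M).det := by
  rw [Matrix.charpoly, ← Polynomial.coe_evalRingHom, RingHom.map_det]
  congr 1
  ext i j
  by_cases h : i = j <;>
    simp [Matrix.charmatrix_apply, Matrix.diagonal_apply, h]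

lemma my_charmatrix_eq (M : Matrix (Fin n) (Fin n) ℝ) :
    charmatrix M = (X : ℝ[X]) • (1 : Matrix (Fin n) (Fin n) ℝ[X]) - M.map C := by
  ext i j
  by_cases h : i = j <;>
    simp [Matrix.charmatrix_apply, Matrix.diagonal_apply, h, Matrix.one_apply]

lemma my_charpoly_conj (U V D : Matrix (Fin n) (Fin n) ℝ) (hUV : U * V = 1) :
    (U * D * V).charpoly = D.charpoly := by
  have key : charmatrix (U * D * V) = (U.map C) * charmatrix D * (V.map C) := by
    rw [my_charmatrix_eq, my_charmatrix_eq, Matrix.mul_sub, Matrix.sub_mul]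
    congr 1
    · rw [Matrix.mul_smul, Matrix.mul_one, Matrix.smul_mul, ← Matrix.map_mul, hUV,
        Matrix.map_one _ (map_zero C) (map_one C)]
    · rw [Matrix.map_mul, Matrix.map_mul]
  have hdet : (U.map C).det * (V.map C).det = 1 := by
    rw [← Matrix.det_mul, ← Matrix.map_mul, hUV, Matrix.map_one _ (map_zero C) (map_one C),
      Matrix.det_one]
  rw [Matrix.charpoly, Matrix.charpoly, key, Matrix.det_mul, Matrix.det_mul]
  calc (U.map C).det * (charmatrix D).det * (V.map C).det
      = (U.map C).det * (V.map C).det * (charmatrix D).det := by ring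
    _ = (charmatrix D).det := by rw [hdet, one_mul]

lemma my_charpoly_diagonal (v : Fin n → ℝ) :
    (Matrix.diagonal v).charpoly = ∏ i, (X - C (v i)) := by
  have : charmatrix (Matrix.diagonal v) = Matrix.diagonal (fun i => (X : ℝ[X]) - C (v i)) := by
    ext i j
    by_cases h : i = j <;>
      simp [Matrix.charmatrix_apply, Matrix.diagonal_apply, h]
  rw [Matrix.charpoly, this, Matrix.det_diagonal]

lemma my_aeval_conj (U V D : Matrix (Fin n) (Fin n) ℝ) (hUV : U * V = 1) (hVU : V * U = 1)
    (q : ℝ[X]) : Polynomial.aeval (U * D * V) q = U * Polynomial.aeval D q * V := by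
  have hpow : ∀ m : ℕ, (U * D * V) ^ m = U * D ^ m * V := by
    intro m
    induction m with
    | zero => simp [hUV]
    | succ m ih =>
        rw [pow_succ, ih, pow_succ]
        calc U * D ^ m * V * (U * D * V) = U * D ^ m * (V * U) * D * V := by
              simp only [Matrix.mul_assoc]
          _ = U * (D ^ m * D) * V := by rw [hVU]; simp only [Matrix.mul_one, Matrix.mul_assoc]
  induction q using Polynomial.induction_on' with
  | add f g hf hg =>
      rw [map_add, hf, hg, map_add, Matrix.mul_add, Matrix.add_mul]
  | monomial m a =>
      rw [Polynomial.aeval_monomial, Polynomial.aeval_monomial, hpow]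
      simp only [Algebra.algebraMap_eq_smul_one, smul_mul_assoc, mul_smul_comm, one_mul]

lemma my_aeval_diagonal (v : Fin n → ℝ) (q : ℝ[X]) :
    Polynomial.aeval (Matrix.diagonal v) q = Matrix.diagonal (fun i => q.eval (v i)) := by
  induction q using Polynomial.induction_on' with
  | add f g hf hg => rw [map_add, hf, hg, Matrix.diagonal_add]; simp
  | monomial m a =>
      rw [Polynomial.aeval_monomial, Matrix.diagonal_pow]
      ext i j
      by_cases h : i = j <;>
        simp [h, Polynomial.eval_monomial, Matrix.diagonal_apply, Pi.pow_apply,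
          Algebra.algebraMap_eq_smul_one]

lemma my_aeval_mulVec {A : Matrix (Fin n) (Fin n) ℝ} {t : ℝ} {v : Fin n → ℝ}
    (h : A *ᵥ v = t • v) (q : ℝ[X]) :
    (Polynomial.aeval A q) *ᵥ v = q.eval t • v := by
  have hpow : ∀ m : ℕ, (A ^ m) *ᵥ v = t ^ m • v := by
    intro m
    induction m with
    | zero => simp
    | succ m ih =>
        rw [pow_succ, ← Matrix.mulVec_mulVec, h, Matrix.mulVec_smul, ih, pow_succ, smul_smul,
          mul_comm]
  induction q using Polynomial.induction_on' with
  | add f g hf hg => rw [map_add, Matrix.add_mulVec, hf, hg, Polynomial.eval_add, add_smul]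
  | monomial m a =>
      rw [Polynomial.aeval_monomial, Algebra.algebraMap_eq_smul_one, smul_mul_assoc, one_mul,
        Matrix.smul_mulVec, hpow, Polynomial.eval_monomial, smul_smul]

end aux


section aux2
variable {n : ℕ}

lemma my_arith {S pd lamp nn : ℝ} (hqn : lamp * (S * nn - S * S) ≤ -(pd * (S * S)))
    (hS : 0 ≤ S) (hnn : 0 < nn) (hml : 0 < -lamp) :
    S * (pd - lamp) ≤ nn * (-lamp) := by
  rcases eq_or_lt_of_le hS with h0 | hSpos
  · rw [← h0, zero_mul]
    exact mul_nonneg hnn.le hml.le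
  · nlinarith [hqn, hSpos, hnn]

lemma my_dot_symm {M : Matrix (Fin n) (Fin n) ℝ} (hM : Mᵀ = M) (x y : Fin n → ℝ) :
    x ⬝ᵥ (M *ᵥ y) = y ⬝ᵥ (M *ᵥ x) := by
  calc x ⬝ᵥ (M *ᵥ y) = (x ᵥ* M) ⬝ᵥ y := Matrix.dotProduct_mulVec _ _ _
    _ = (M *ᵥ x) ⬝ᵥ y := by
        conv_lhs => rw [← hM, Matrix.vecMul_transpose]
    _ = y ⬝ᵥ (M *ᵥ x) := dotProduct_comm _ _

lemma my_trace_conj (U V D : Matrix (Fin n) (Fin n) ℝ) (hVU : V * U = 1) :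
    (U * D * V).trace = D.trace := by
  rw [Matrix.trace_mul_comm, ← Matrix.mul_assoc, hVU, Matrix.one_mul]

lemma my_eig_le {d : ℕ} {G : SimpleGraph (Fin n)} [DecidableRel G.Adj]
    (hreg : G.IsRegularOfDegree d) {t : ℝ} {v : Fin n → ℝ} (hv : v ≠ 0)
    (h : G.adjMatrix ℝ *ᵥ v = t • v) : t ≤ d := by
  have hrow : ∀ i, ∑ j, (G.adjMatrix ℝ) i j = (d : ℝ) := by
    intro i
    have := G.adjMatrix_mulVec_const_apply_of_regular (α := ℝ) (a := 1) hreg (v := i)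
    simpa [Matrix.mulVec, dotProduct] using this
  have hcol : ∀ j, ∑ i, (G.adjMatrix ℝ) i j = (d : ℝ) := by
    intro j
    have : ∀ i, (G.adjMatrix ℝ) i j = (G.adjMatrix ℝ) j i := by
      intro i; simp [SimpleGraph.adjMatrix_apply, G.adj_comm]
    rw [Finset.sum_congr rfl fun i _ => this i]
    exact hrow j
  have hQ : 0 < ∑ i, v i ^ 2 := by
    obtain ⟨i0, hi0⟩ : ∃ i, v i ≠ 0 := by
      by_contra hc; push_neg at hc; exact hv (funext hc)
    exact Finset.sum_pos' (fun i _ => sq_nonneg _) ⟨i0, Finset.mem_univ _, by positivity⟩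
  have hQt : v ⬝ᵥ (G.adjMatrix ℝ *ᵥ v) = t * ∑ i, v i ^ 2 := by
    rw [h, dotProduct_smul]
    simp [dotProduct, sq, Finset.mul_sum]
  have hbound : v ⬝ᵥ (G.adjMatrix ℝ *ᵥ v) ≤ (d : ℝ) * ∑ i, v i ^ 2 := by
    rw [SimpleGraph.dotProduct_mulVec_adjMatrix]
    have step1 : ∑ i, ∑ j, (if G.Adj i j then v i * v j else 0)
        ≤ ∑ i, ∑ j, (G.adjMatrix ℝ) i j * ((v i ^ 2 + v j ^ 2) / 2) := by
      apply Finset.sum_le_sum; intro i _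
      apply Finset.sum_le_sum; intro j _
      by_cases hij : G.Adj i j
      · simp only [hij, if_true, SimpleGraph.adjMatrix_apply, one_mul]
        nlinarith [sq_nonneg (v i - v j)]
      · simp [hij]
    refine step1.trans (le_of_eq ?_)
    have split : ∀ i j, (G.adjMatrix ℝ) i j * ((v i ^ 2 + v j ^ 2) / 2)
        = (G.adjMatrix ℝ) i j * (v i ^ 2 / 2) + (G.adjMatrix ℝ) i j * (v j ^ 2 / 2) := by
      intro i j; ring
    simp_rw [split, Finset.sum_add_distrib]
    have e1 : ∑ i, ∑ j, (G.adjMatrix ℝ) i j * (v i ^ 2 / 2) = (d : ℝ) * ∑ i, v i ^ 2 / 2 := by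
      rw [Finset.mul_sum]
      apply Finset.sum_congr rfl; intro i _
      rw [← Finset.sum_mul, hrow]
    have e2 : ∑ i, ∑ j, (G.adjMatrix ℝ) i j * (v j ^ 2 / 2) = (d : ℝ) * ∑ i, v i ^ 2 / 2 := by
      rw [Finset.sum_comm, Finset.mul_sum]
      apply Finset.sum_congr rfl; intro j _
      rw [← Finset.sum_mul, hcol]
    rw [e1, e2, ← Finset.sum_div]
    ring
  rw [hQt] at hbound
  exact le_of_mul_le_mul_right (by linarith) hQ

end aux2

set_option maxHeartbeats 1000000 in
/-- **Generalized Hoffman bound.** Let `G` be a connected regular `k`-partially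
walk-regular graph with eigenvalues `λ₁ > λ₂ ≥ ⋯ ≥ λₙ`, and let `p` be a polynomial of
degree at most `k` with `Σᵢ p(λᵢ) = 0` and `λ(p) = min_{i∈[2,n]} p(λᵢ) < 0 < p(λ₁)`.
Then `α_k(G) ≤ n / (1 - p(λ₁)/λ(p))`. -/
theorem generalized_hoffman_bound {n d k : ℕ} (hn : 0 < n) (G : SimpleGraph (Fin n))
    [DecidableRel G.Adj] (hconn : G.Connected) (hreg : G.IsRegularOfDegree d)
    (hwr : ∀ l ≤ k, ∀ u v : Fin n,
      ((G.adjMatrix ℝ) ^ l) u u = ((G.adjMatrix ℝ) ^ l) v v)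
    (lam : Fin n → ℝ) (hlam : Antitone lam)
    (hgap : ∀ i, i ≠ ⟨0, hn⟩ → lam i < lam ⟨0, hn⟩)
    (hchar : (G.adjMatrix ℝ).charpoly = ∏ i, (X - C (lam i)))
    (p : Polynomial ℝ) (hp : p.natDegree ≤ k)
    (htr : ∑ i, p.eval (lam i) = 0) (lamp : ℝ)
    (hlamp : IsLeast {x | ∃ i, i ≠ ⟨0, hn⟩ ∧ x = p.eval (lam i)} lamp)
    (hneg : lamp < 0) (hpos : 0 < p.eval (lam ⟨0, hn⟩)) :
    (G.kIndepNum k : ℝ) ≤ n / (1 - p.eval (lam ⟨0, hn⟩) / lamp) := by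
  classical
  set A := G.adjMatrix ℝ with hAdef
  have hAH : A.IsHermitian := by
    rw [Matrix.IsHermitian, Matrix.conjTranspose_eq_transpose_of_trivial]
    exact G.isSymm_adjMatrix
  set μ : Fin n → ℝ := hAH.eigenvalues with hμdef
  set U : Matrix (Fin n) (Fin n) ℝ := (hAH.eigenvectorUnitary : Matrix (Fin n) (Fin n) ℝ)
    with hUdef
  have hUV : U * star U = 1 := Matrix.mem_unitaryGroup_iff.mp (hAH.eigenvectorUnitary).2
  have hVU : star U * U = 1 := Matrix.mem_unitaryGroup_iff'.mp (hAH.eigenvectorUnitary).2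
  have hspec : A = U * Matrix.diagonal μ * star U := by
    have h := hAH.spectral_theorem
    simpa using h
  -- the characteristic polynomial in terms of the Hermitian eigenvalues
  have hcharA : A.charpoly = ∏ j, (X - C (μ j)) := by
    rw [hspec, my_charpoly_conj _ _ _ hUV, my_charpoly_diagonal]
  -- the multisets of eigenvalues agree
  have hms : (univ.val.map lam) = (univ.val.map μ) := by
    have h1 : (∏ i, (X - C (lam i))) = ∏ j, (X - C (μ j)) := hchar.symm.trans hcharA
    have e1 : (∏ i, (X - C (lam i))).roots = univ.val.map lam := by
      rw [show (∏ i, (X - C (lam i)))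
            = ((univ.val.map lam).map (fun a : ℝ => X - C a)).prod by
          rw [Multiset.map_map]; rfl,
        Polynomial.roots_multiset_prod_X_sub_C]
    have e2 : (∏ j, (X - C (μ j))).roots = univ.val.map μ := by
      rw [show (∏ j, (X - C (μ j)))
            = ((univ.val.map μ).map (fun a : ℝ => X - C a)).prod by
          rw [Multiset.map_map]; rfl,
        Polynomial.roots_multiset_prod_X_sub_C]
    rw [← e1, ← e2, h1]
  have hmem_mu : ∀ j, ∃ i, μ j = lam i := by
    intro j
    have hj : μ j ∈ univ.val.map lam := by
      rw [hms]
      exact Multiset.mem_map_of_mem _ (Finset.mem_val.mpr (Finset.mem_univ j))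
    obtain ⟨i, _, hi⟩ := Multiset.mem_map.mp hj
    exact ⟨i, hi.symm⟩
  -- the all-ones vector is an eigenvector with eigenvalue d
  have hone : A *ᵥ (fun _ => (1 : ℝ)) = (d : ℝ) • (fun _ => (1 : ℝ)) := by
    funext u
    show (A *ᵥ Function.const (Fin n) (1 : ℝ)) u = _
    rw [G.adjMatrix_mulVec_const_apply_of_regular hreg]
    simp
  -- lam 0 = d
  have hlam0 : lam ⟨0, hn⟩ = (d : ℝ) := by
    have hd_eval : A.charpoly.eval (d : ℝ) = 0 := by
      rw [my_eval_charpoly]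
      apply Matrix.exists_mulVec_eq_zero_iff.mp
      refine ⟨fun _ => (1 : ℝ), ?_, ?_⟩
      · intro h0
        have := congrFun h0 ⟨0, hn⟩
        simpa using this
      · rw [Matrix.sub_mulVec, hone]
        funext i
        simp [Matrix.mulVec_diagonal]
    have hd_root : ∃ i, lam i = (d : ℝ) := by
      rw [hchar, Polynomial.eval_prod] at hd_eval
      obtain ⟨i, _, hi⟩ := Finset.prod_eq_zero_iff.mp hd_eval
      simp only [Polynomial.eval_sub, Polynomial.eval_X, Polynomial.eval_C] at hi
      exact ⟨i, by linarith⟩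
    have hlam0_le : lam ⟨0, hn⟩ ≤ (d : ℝ) := by
      have h0 : A.charpoly.eval (lam ⟨0, hn⟩) = 0 := by
        rw [hchar, Polynomial.eval_prod]
        apply Finset.prod_eq_zero (Finset.mem_univ (⟨0, hn⟩ : Fin n))
        simp
      rw [my_eval_charpoly] at h0
      obtain ⟨v, hv0, hveq⟩ := Matrix.exists_mulVec_eq_zero_iff.mpr h0
      have hAv : A *ᵥ v = lam ⟨0, hn⟩ • v := by
        rw [Matrix.sub_mulVec, sub_eq_zero] at hveq
        funext i
        have := congrFun hveq.symm i
        simpa [Matrix.mulVec_diagonal] using this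
      exact my_eig_le hreg hv0 hAv
    have hd_le : (d : ℝ) ≤ lam ⟨0, hn⟩ := by
      obtain ⟨i, hi⟩ := hd_root
      rw [← hi]
      exact hlam (Fin.le_def.mpr (Nat.zero_le _))
    exact le_antisymm hlam0_le hd_le
  set pd := p.eval (lam ⟨0, hn⟩) with hpddef
  set M := Polynomial.aeval A p with hMdef
  have hMspec : M = U * Matrix.diagonal (fun j => p.eval (μ j)) * star U := by
    rw [hMdef, hspec, my_aeval_conj _ _ _ hUV hVU, my_aeval_diagonal]
  -- trace of M is zero
  have htrM : M.trace = 0 := by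
    rw [hMspec, my_trace_conj _ _ _ hVU, Matrix.trace_diagonal]
    have hsum := congrArg (fun m : Multiset ℝ => (m.map p.eval).sum) hms
    simp only [Multiset.map_map, Function.comp] at hsum
    rw [Finset.sum_eq_multiset_sum] at htr ⊢
    rw [← hsum]
    exact htr
  -- representation of M as a sum of powers
  have hrepr : M = ∑ l ∈ Finset.range (k + 1), p.coeff l • A ^ l :=
    Polynomial.aeval_eq_sum_range' (Nat.lt_succ_of_le hp) A
  -- diagonal of M vanishes
  have hdiag : ∀ u, M u u = 0 := by
    have hconst : ∀ u v, M u u = M v v := by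
      intro u v
      rw [hrepr]
      simp only [Matrix.sum_apply, Matrix.smul_apply, smul_eq_mul]
      exact Finset.sum_congr rfl fun l hl => by
        rw [hwr l (Nat.lt_succ_iff.mp (Finset.mem_range.mp hl)) u v]
    intro u
    have htr2 : M.trace = (n : ℝ) * M u u := by
      have h1 : M.trace = ∑ _v : Fin n, M u u := Finset.sum_congr rfl fun v _ => hconst v u
      rw [h1, Finset.sum_const, Finset.card_univ, Fintype.card_fin, nsmul_eq_mul]
    have h0 : (n : ℝ) * M u u = 0 := by rw [← htr2, htrM]
    rcases mul_eq_zero.mp h0 with h | h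
    · exact absurd h (Nat.cast_ne_zero.mpr hn.ne')
    · exact h
  -- positive semidefiniteness of M - lamp • 1
  have hPSD : (M - lamp • (1 : Matrix (Fin n) (Fin n) ℝ)).PosSemidef := by
    have hPdiag : M - lamp • (1 : Matrix (Fin n) (Fin n) ℝ)
        = U * Matrix.diagonal (fun j => p.eval (μ j) - lamp) * star U := by
      have h1 : lamp • (1 : Matrix (Fin n) (Fin n) ℝ)
          = U * Matrix.diagonal (fun _ => lamp) * star U := by
        have : Matrix.diagonal (fun _ : Fin n => lamp)
            = lamp • (1 : Matrix (Fin n) (Fin n) ℝ) := by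
          ext i j
          by_cases h : i = j <;> simp [Matrix.diagonal_apply, h, Matrix.one_apply]
        rw [this, Matrix.mul_smul, Matrix.mul_one, Matrix.smul_mul, hUV]
      rw [hMspec, h1, ← Matrix.sub_mul, ← Matrix.mul_sub, Matrix.diagonal_sub]
    rw [hPdiag, show star U = Uᴴ from rfl]
    apply Matrix.PosSemidef.mul_mul_conjTranspose_same
    apply Matrix.PosSemidef.diagonal
    intro j
    simp only [Pi.zero_apply]
    obtain ⟨i, hi⟩ := hmem_mu j
    have hgoal : (0 : ℝ) ≤ p.eval (μ j) - lamp := by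
      rw [hi]
      by_cases hi0 : i = ⟨0, hn⟩
      · subst hi0
        linarith
      · have hge := hlamp.2 ⟨i, hi0, rfl⟩
        linarith
    exact hgoal
  -- quadratic form lower bound
  have hquad : ∀ z : Fin n → ℝ, lamp * (z ⬝ᵥ z) ≤ z ⬝ᵥ (M *ᵥ z) := by
    intro z
    have h0 := hPSD.dotProduct_mulVec_nonneg z
    have hstar : star z = z := by
      funext i; simp
    rw [hstar, Matrix.sub_mulVec, Matrix.smul_mulVec, Matrix.one_mulVec,
      dotProduct_sub, dotProduct_smul, smul_eq_mul] at h0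
    linarith
  -- symmetry of M
  have hMsym : Mᵀ = M := by
    have h2 : (M - lamp • (1 : Matrix (Fin n) (Fin n) ℝ))ᵀ
        = M - lamp • (1 : Matrix (Fin n) (Fin n) ℝ) := by
      rw [← Matrix.conjTranspose_eq_transpose_of_trivial]
      exact hPSD.1
    rw [Matrix.transpose_sub, Matrix.transpose_smul, Matrix.transpose_one] at h2
    exact sub_left_inj.mp h2
  -- a maximum k-independent set
  obtain ⟨s, hscard, hsind⟩ : ∃ s : Finset (Fin n),
      s.card = G.kIndepNum k ∧ ∀ u ∈ s, ∀ v ∈ s, ¬ (G.power k).Adj u v := by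
    have hmem := Nat.sSup_mem
      (s := {m | ∃ s : Finset (Fin n), s.card = m ∧ ∀ u ∈ s, ∀ v ∈ s, ¬ (G.power k).Adj u v})
      ⟨0, ∅, by simp⟩
      ⟨n, by
        rintro m ⟨s, rfl, -⟩
        calc s.card ≤ Finset.univ.card := Finset.card_le_univ s
          _ = n := by simp⟩
    obtain ⟨s, hs1, hs2⟩ := hmem
    exact ⟨s, hs1, hs2⟩
  -- entries of M vanish on s
  have hMuv : ∀ u ∈ s, ∀ v ∈ s, M u v = 0 := by
    intro u hu v hv
    by_cases huv : u = v
    · subst huv; exact hdiag u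
    · have hnadj := hsind u hu v hv
      have hnk : ¬ (G.Reachable u v ∧ G.dist u v ≤ k) := fun hc => hnadj ⟨huv, hc.1, hc.2⟩
      have hpow0 : ∀ l ≤ k, (A ^ l) u v = 0 := by
        intro l hl
        rw [hAdef, SimpleGraph.adjMatrix_pow_apply_eq_card_walk]
        have hempty : IsEmpty {w : G.Walk u v // w.length = l} :=
          ⟨fun ⟨w, hw⟩ => hnk ⟨⟨w⟩, le_trans (hw ▸ SimpleGraph.dist_le w) hl⟩⟩
        have hc : Fintype.card {p : G.Walk u v | p.length = l} = 0 :=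
          Fintype.card_eq_zero_iff.mpr hempty
        rw [hc]; simp
      rw [hrepr]
      simp only [Matrix.sum_apply, Matrix.smul_apply, smul_eq_mul]
      apply Finset.sum_eq_zero
      intro l hl
      rw [hpow0 l (Nat.lt_succ_iff.mp (Finset.mem_range.mp hl)), mul_zero]
  -- set up the vectors
  set one : Fin n → ℝ := fun _ => 1 with honedef
  set S : ℝ := (s.card : ℝ) with hSdef
  set c : ℝ := S / n with hcdef
  set x : Fin n → ℝ := fun u => if u ∈ s then 1 else 0 with hxdef
  set z : Fin n → ℝ := x - c • one with hzdef
  have hn' : (0 : ℝ) < n := by exact_mod_cast hn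
  have hxsum : ∑ u, x u = S := by
    rw [hxdef]
    simp only [Finset.sum_boole]
    rw [Finset.filter_univ_mem]
  have hxx : x ⬝ᵥ x = S := by
    rw [dotProduct]
    rw [Finset.sum_congr rfl (fun u _ => show x u * x u = x u by
      by_cases h : u ∈ s <;> simp [hxdef, h])]
    exact hxsum
  have hxone : x ⬝ᵥ one = S := by
    rw [dotProduct]
    simp only [honedef, mul_one]
    exact hxsum
  have hone_x : one ⬝ᵥ x = S := by rw [dotProduct_comm]; exact hxone
  have honeone : one ⬝ᵥ one = (n : ℝ) := by
    simp [honedef, dotProduct]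
  have hcn : c * n = S := by
    rw [hcdef]
    field_simp
  have hMone : M *ᵥ one = pd • one := by
    have h := my_aeval_mulVec (A := A) (t := (d : ℝ)) (v := one) (by rw [honedef]; exact hone) p
    rw [hpddef, hlam0]
    exact h
  have hxMx : x ⬝ᵥ (M *ᵥ x) = 0 := by
    rw [dotProduct]
    apply Finset.sum_eq_zero
    intro u _
    by_cases hu : u ∈ s
    · have h0 : (M *ᵥ x) u = 0 := by
        rw [Matrix.mulVec, dotProduct]
        apply Finset.sum_eq_zero
        intro v _
        by_cases hv : v ∈ s
        · rw [hMuv u hu v hv, zero_mul]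
        · rw [show x v = 0 by simp [hxdef, hv], mul_zero]
      rw [h0, mul_zero]
    · rw [show x u = 0 by simp [hxdef, hu], zero_mul]
  have h1 : x ⬝ᵥ (M *ᵥ one) = pd * S := by
    rw [hMone, dotProduct_smul, smul_eq_mul, hxone]
  have h3 : one ⬝ᵥ (M *ᵥ one) = pd * n := by
    rw [hMone, dotProduct_smul, smul_eq_mul, honeone]
  have h2 : one ⬝ᵥ (M *ᵥ x) = pd * S := by rw [my_dot_symm hMsym, h1]
  have e : z ⬝ᵥ (M *ᵥ z)
      = x ⬝ᵥ (M *ᵥ x) - c * (x ⬝ᵥ (M *ᵥ one)) - c * (one ⬝ᵥ (M *ᵥ x))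
        + c * c * (one ⬝ᵥ (M *ᵥ one)) := by
    rw [hzdef]
    simp only [Matrix.mulVec_sub, Matrix.mulVec_smul, sub_dotProduct,
      dotProduct_sub, smul_dotProduct, dotProduct_smul, smul_eq_mul]
    ring
  have ezz : z ⬝ᵥ z = S - 2 * c * S + c * c * (n : ℝ) := by
    rw [hzdef]
    simp only [sub_dotProduct, dotProduct_sub, smul_dotProduct,
      dotProduct_smul, smul_eq_mul]
    rw [hxx, hxone, hone_x, honeone]
    ring
  have hzMz : z ⬝ᵥ (M *ᵥ z) = pd * (c * c * (n : ℝ)) - 2 * c * (pd * S) := by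
    rw [e, hxMx, h1, h2, h3]
    ring
  have hq := hquad z
  rw [ezz, hzMz] at hq
  have hqn := mul_le_mul_of_nonneg_right hq hn'.le
  have eL : lamp * (S - 2 * c * S + c * c * (n:ℝ)) * (n:ℝ)
      = lamp * (S * (n:ℝ) - S * S) := by
    rw [hcdef]
    field_simp
    ring
  have eR : (pd * (c * c * (n:ℝ)) - 2 * c * (pd * S)) * (n:ℝ) = -(pd * (S * S)) := by
    rw [hcdef]
    field_simp
    ring
  rw [eL, eR] at hqn
  -- final arithmetic
  have hden : 0 < 1 - pd / lamp := by
    have hd0 : pd / lamp < 0 := div_neg_of_pos_of_neg hpos hneg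
    linarith
  have hSnn : 0 ≤ S := by rw [hSdef]; exact Nat.cast_nonneg _
  have hgoalS : (G.kIndepNum k : ℝ) = S := by rw [hSdef, hscard]
  rw [hgoalS, le_div_iff₀ hden]
  have hml : 0 < -lamp := by linarith
  have key2 : S * (pd - lamp) ≤ (n : ℝ) * (-lamp) := my_arith hqn hSnn hn' hml
  have hl0 : lamp ≠ 0 := ne_of_lt hneg
  have hrw : S * (1 - pd / lamp) = S * (pd - lamp) / (-lamp) := by
    field_simp
    ring
  rw [hrw, div_le_iff₀ hml]
  exact key2
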